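/- arXiv:2504.06838 — 2 statements merged into one kernel-verified Lean document; each statement's English description precedes it below -/
import Mathlib

section
/- Let z be a random vector in R^d (d ≥ 2) with i.i.d. coordinates equal to ±a with probability 1/2 (a > 0), let g ∈ R^d be a nonzero fixed vector, and let ĝ = (z^{-1})(zᵀ g). Then the trace of the covariance matrix of ĝ equals (d − 1)‖g‖², i.e. E[‖ĝ − g‖²] = (d − 1)‖g‖². -/
open MeasureTheory ProbabilityTheory
open scoped ENNReal

/-- Variance of the single-sample SPSA estimator: E[‖ĝ − g‖²] = (d − 1) ‖g‖². -/
theorem stmt_6 {Ω : Type*} [MeasureSpace Ω] [IsProbabilityMeasure (ℙ : Measure Ω)]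
    {d : ℕ} (hd : 2 ≤ d) (a : ℝ) (ha : 0 < a) (z : Ω → Fin d → ℝ)
    (g : Fin d → ℝ) (hg : g ≠ 0)
    (hmeas : ∀ i, Measurable fun ω => z ω i)
    (hindep : iIndepFun (fun i ω => z ω i) ℙ)
    (hdist : ∀ i, Measure.map (fun ω => z ω i) ℙ =
      (1 / 2 : ℝ≥0∞) • Measure.dirac a + (1 / 2 : ℝ≥0∞) • Measure.dirac (-a)) :
    ∫ ω, ∑ i, ((∑ j, z ω j * g j) / z ω i - g i) ^ 2 ∂ℙ
      = ((d : ℝ) - 1) * ∑ i, g i ^ 2 := by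
  classical
  have ha' : (a : ℝ) ≠ 0 := ne_of_gt ha
  have ha2 : (a ^ 2 : ℝ) ≠ 0 := pow_ne_zero _ ha'
  -- a.e., each coordinate is ± a
  have h_ae : ∀ᵐ ω ∂(ℙ : Measure Ω), ∀ i, z ω i = a ∨ z ω i = -a := by
    rw [ae_all_iff]
    intro i
    have hS : MeasurableSet ({a, -a} : Set ℝ) :=
      (measurableSet_singleton (-a)).insert a
    have hpre : {ω | ¬ (z ω i = a ∨ z ω i = -a)}
        = (fun ω => z ω i) ⁻¹' ({a, -a} : Set ℝ)ᶜ := by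
      ext ω; simp [not_or]
    rw [ae_iff, hpre, ← Measure.map_apply (hmeas i) hS.compl, hdist i]
    simp [Measure.dirac_apply' _ hS.compl, Set.indicator_of_notMem]
  -- boundedness and integrability
  have hbd : ∀ i, ∀ᵐ ω ∂(ℙ : Measure Ω), ‖z ω i‖ ≤ a := by
    intro i
    filter_upwards [h_ae] with ω hω
    rcases hω i with h | h <;> rw [h] <;> simp [abs_of_pos ha, le_of_lt ha, ha.le]
  have intZ : ∀ i, Integrable (fun ω => z ω i) ℙ :=
    fun i => (integrable_const a).mono' (hmeas i).aestronglyMeasurable (hbd i)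
  have intZZ : ∀ i j, Integrable (fun ω => z ω i * z ω j) ℙ := by
    intro i j
    refine (integrable_const (a * a)).mono'
      (((hmeas i).mul (hmeas j)).aestronglyMeasurable) ?_
    filter_upwards [hbd i, hbd j] with ω h1 h2
    calc ‖z ω i * z ω j‖ = ‖z ω i‖ * ‖z ω j‖ := norm_mul _ _
      _ ≤ a * a := mul_le_mul h1 h2 (norm_nonneg _) ha.le
  have intT : ∀ j k, Integrable (fun ω => (z ω j * g j) * (z ω k * g k)) ℙ := by
    intro j k
    have := (intZZ j k).const_mul (g j * g k)
    exact this.congr (Filter.Eventually.of_forall fun ω => by ring)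
  -- mean zero
  have EZ : ∀ i, ∫ ω, z ω i ∂ℙ = 0 := by
    intro i
    have h1 : ∀ x : ℝ, Integrable (id : ℝ → ℝ) (Measure.dirac x) :=
      fun x => ⟨stronglyMeasurable_id.aestronglyMeasurable,
        by simp [HasFiniteIntegral, lintegral_dirac]⟩
    have : ∫ ω, z ω i ∂ℙ = ∫ x, id x ∂(Measure.map (fun ω => z ω i) ℙ) :=
      (integral_map (hmeas i).aemeasurable aestronglyMeasurable_id).symm
    rw [this, hdist i,
      integral_add_measure ((h1 a).smul_measure (by norm_num))
        ((h1 (-a)).smul_measure (by norm_num)),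
      integral_smul_measure, integral_smul_measure, integral_dirac, integral_dirac]
    norm_num
  -- second moments
  have E2 : ∀ j k, ∫ ω, (z ω j * g j) * (z ω k * g k) ∂ℙ
      = if j = k then g j ^ 2 * a ^ 2 else 0 := by
    intro j k
    by_cases hjk : j = k
    · subst hjk
      simp only [if_pos rfl]
      have heq : (fun ω => (z ω j * g j) * (z ω j * g j))
          =ᵐ[(ℙ : Measure Ω)] fun _ => g j ^ 2 * a ^ 2 := by
        filter_upwards [h_ae] with ω hω
        rcases hω j with h | h <;> rw [h] <;> ring
      rw [integral_congr_ae heq, integral_const, probReal_univ]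
      simp
    · simp only [if_neg hjk]
      have hzz : ∫ ω, z ω j * z ω k ∂ℙ = 0 := by
        have hind : IndepFun (fun ω => z ω j) (fun ω => z ω k) ℙ :=
          hindep.indepFun hjk
        have h := hind.integral_mul_eq_mul_integral (intZ j).aestronglyMeasurable (intZ k).aestronglyMeasurable
        simpa [Pi.mul_apply, EZ j, EZ k] using h
      have : (fun ω => (z ω j * g j) * (z ω k * g k))
          = fun ω => (g j * g k) * (z ω j * z ω k) := by
        funext ω; ring
      rw [this, integral_const_mul, hzz, mul_zero]
  -- rewrite the integrand a.e.
  have hrw : ∀ᵐ ω ∂(ℙ : Measure Ω),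
      ∑ i, ((∑ j, z ω j * g j) / z ω i - g i) ^ 2
        = ∑ i, (∑ j ∈ Finset.univ.erase i, ∑ k ∈ Finset.univ.erase i,
            (z ω j * g j) * (z ω k * g k)) / a ^ 2 := by
    filter_upwards [h_ae] with ω hω
    refine Finset.sum_congr rfl fun i _ => ?_
    have hne : z ω i ≠ 0 := by
      rcases hω i with h | h <;> rw [h] <;> simp [ha', ha.ne']
    have hsq : z ω i ^ 2 = a ^ 2 := by
      rcases hω i with h | h <;> rw [h] <;> ring
    have hS : (∑ j, z ω j * g j)
        = (∑ j ∈ Finset.univ.erase i, z ω j * g j) + z ω i * g i :=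
      (Finset.sum_erase_add _ _ (Finset.mem_univ i)).symm
    rw [hS, add_div, mul_div_cancel_left₀ _ hne, add_sub_cancel_right,
      div_pow, hsq, sq, Finset.sum_mul_sum]
  rw [integral_congr_ae hrw]
  -- push the integral inside the sums
  have intI : ∀ i : Fin d, Integrable (fun ω =>
      (∑ j ∈ Finset.univ.erase i, ∑ k ∈ Finset.univ.erase i,
        (z ω j * g j) * (z ω k * g k)) / a ^ 2) ℙ := by
    intro i
    exact ((integrable_finset_sum _ fun j _ =>
      integrable_finset_sum _ fun k _ => intT j k)).div_const _
  rw [integral_finset_sum _ fun i _ => intI i]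
  have hterm : ∀ i : Fin d,
      ∫ ω, (∑ j ∈ Finset.univ.erase i, ∑ k ∈ Finset.univ.erase i,
        (z ω j * g j) * (z ω k * g k)) / a ^ 2 ∂ℙ
      = (∑ j ∈ Finset.univ.erase i, g j ^ 2) := by
    intro i
    rw [integral_div,
      integral_finset_sum _ fun j _ =>
        integrable_finset_sum _ fun k _ => intT j k]
    have : ∀ j ∈ Finset.univ.erase i,
        (∫ ω, ∑ k ∈ Finset.univ.erase i, (z ω j * g j) * (z ω k * g k) ∂ℙ)
          = g j ^ 2 * a ^ 2 := by
      intro j hj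
      rw [integral_finset_sum _ fun k _ => intT j k]
      rw [Finset.sum_congr rfl fun k _ => E2 j k]
      simp [Finset.sum_ite_eq, hj]
    rw [Finset.sum_congr rfl this, ← Finset.sum_mul, mul_div_assoc, div_self ha2,
      mul_one]
  rw [Finset.sum_congr rfl fun i _ => hterm i]
  have : ∀ i : Fin d, (∑ j ∈ Finset.univ.erase i, g j ^ 2)
      = (∑ j, g j ^ 2) - g i ^ 2 :=
    fun i => Finset.sum_erase_eq_sub (Finset.mem_univ i)
  rw [Finset.sum_congr rfl fun i _ => this i, Finset.sum_sub_distrib,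
    Finset.sum_const, Finset.card_univ, Fintype.card_fin, nsmul_eq_mul]
  ring
end

section
/- Let z₁, ..., z_N be independent random vectors in R^d, each with i.i.d. ±a coordinates (probability 1/2 each, a > 0), let g ∈ R^d be fixed, and define ĝ = (1/N) Σ_{n=1}^N (z_n^{-1})(z_nᵀ g). Then E[‖ĝ − g‖²] = ((d − 1)/N)‖g‖². -/
open MeasureTheory ProbabilityTheory
open scoped ENNReal

/-- Variance of the N-sample SPSA estimator: E[‖ĝ − g‖²] = ((d − 1)/N) ‖g‖². -/
theorem stmt_7 {Ω : Type*} [MeasureSpace Ω] [IsProbabilityMeasure (ℙ : Measure Ω)]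
    {d N : ℕ} (hN : 0 < N) (a : ℝ) (ha : 0 < a)
    (z : Fin N → Ω → Fin d → ℝ) (g : Fin d → ℝ)
    (hmeas : ∀ n i, Measurable fun ω => z n ω i)
    (hindep : iIndepFun
      (fun (p : Fin N × Fin d) ω => z p.1 ω p.2) ℙ)
    (hdist : ∀ n i, Measure.map (fun ω => z n ω i) ℙ =
      (1 / 2 : ℝ≥0∞) • Measure.dirac a + (1 / 2 : ℝ≥0∞) • Measure.dirac (-a)) :
    ∫ ω, ∑ i, ((1 / N : ℝ) * (∑ n, (∑ j, z n ω j * g j) / z n ω i) - g i) ^ 2 ∂ℙ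
      = (((d : ℝ) - 1) / N) * ∑ i, g i ^ 2 := by
  classical
  have hNr : (N : ℝ) ≠ 0 := Nat.cast_ne_zero.mpr hN.ne'
  have ha0 : a ≠ 0 := ha.ne'
  have ha2 : a ^ 2 ≠ 0 := pow_ne_zero _ ha0
  set F : Fin N × Fin d → Ω → ℝ := fun p ω => z p.1 ω p.2 with hF
  have hFmeas : ∀ p, Measurable (F p) := fun p => hmeas p.1 p.2
  -- almost surely every coordinate is ±a
  have hae : ∀ᵐ ω ∂ℙ, ∀ n i, z n ω i = a ∨ z n ω i = -a := by
    rw [ae_all_iff]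
    intro n
    rw [ae_all_iff]
    intro i
    rw [ae_iff]
    have hs : MeasurableSet {x : ℝ | ¬(x = a ∨ x = -a)} := by
      have : {x : ℝ | ¬(x = a ∨ x = -a)} = ({a}ᶜ ∩ {-a}ᶜ : Set ℝ) := by
        ext x; simp [not_or]
      rw [this]
      exact (measurableSet_singleton a).compl.inter (measurableSet_singleton (-a)).compl
    have : {ω | ¬(z n ω i = a ∨ z n ω i = -a)}
        = (fun ω => z n ω i) ⁻¹' {x : ℝ | ¬(x = a ∨ x = -a)} := rfl
    rw [this, ← Measure.map_apply (hmeas n i) hs, hdist n i]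
    simp [Measure.dirac_apply' _ hs]
  -- first moment is zero
  have E0 : ∀ p : Fin N × Fin d, ∫ ω, F p ω ∂ℙ = 0 := by
    intro p
    have : ∫ ω, F p ω ∂ℙ = ∫ x, x ∂(Measure.map (fun ω => z p.1 ω p.2) ℙ) :=
      (integral_map (hFmeas p).aemeasurable measurable_id.aestronglyMeasurable).symm
    rw [this, hdist p.1 p.2]
    have h1 : ∀ b : ℝ, Integrable (fun x : ℝ => x) ((1/2 : ℝ≥0∞) • Measure.dirac b) := by
      intro b
      refine ((integrable_const b).congr ?_).smul_measure (by norm_num)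
      rw [Filter.EventuallyEq, ae_dirac_eq]
      simp
    rw [integral_add_measure (h1 a) (h1 (-a)), integral_smul_measure, integral_smul_measure,
      integral_dirac, integral_dirac]
    norm_num
  -- second moment
  have E2 : ∀ p : Fin N × Fin d, ∫ ω, (F p ω) ^ 2 ∂ℙ = a ^ 2 := by
    intro p
    have h : (fun ω => (F p ω) ^ 2) =ᵐ[ℙ] fun _ => a ^ 2 := by
      filter_upwards [hae] with ω h
      rcases h p.1 p.2 with h' | h' <;> simp [F, h'] <;> ring
    rw [integral_congr_ae h, integral_const]
    simp
  -- pairwise product expectation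
  have hpair : ∀ p q : Fin N × Fin d, p ≠ q → ∫ ω, F p ω * F q ω ∂ℙ = 0 := by
    intro p q hpq
    have h := (hindep.indepFun hpq).integral_mul_eq_mul_integral
      (hFmeas p).aestronglyMeasurable (hFmeas q).aestronglyMeasurable
    rw [show F p * F q = fun ω => F p ω * F q ω from rfl] at h
    rw [h, E0 p, E0 q, mul_zero]
  -- squares of two distinct coordinates
  have hsq4 : ∀ p q : Fin N × Fin d, p ≠ q →
      ∫ ω, (F p ω) ^ 2 * (F q ω) ^ 2 ∂ℙ = a ^ 4 := by
    intro p q hpq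
    have hind := (hindep.indepFun hpq).comp
      (show Measurable fun x : ℝ => x ^ 2 by fun_prop)
      (show Measurable fun x : ℝ => x ^ 2 by fun_prop)
    have h := hind.integral_mul_eq_mul_integral
      (((hFmeas p).pow_const 2).aestronglyMeasurable)
      (((hFmeas q).pow_const 2).aestronglyMeasurable)
    rw [show ((fun x : ℝ => x ^ 2) ∘ F p) * ((fun x : ℝ => x ^ 2) ∘ F q)
      = fun ω => F p ω ^ 2 * F q ω ^ 2 from rfl] at h
    simp only [Function.comp_def, id] at h
    rw [h, E2 p, E2 q]
    ring
  -- three distinct coordinates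
  have htrip : ∀ p q r : Fin N × Fin d, p ≠ r → q ≠ r →
      ∫ ω, (F p ω) ^ 2 * F q ω * F r ω ∂ℙ = 0 := by
    intro p q r hpr hqr
    have hind := (hindep.indepFun_prodMk hFmeas p q r hpr hqr).comp
      (show Measurable fun v : ℝ × ℝ => v.1 ^ 2 * v.2 by fun_prop) measurable_id
    have h := hind.integral_mul_eq_mul_integral
      ((((hFmeas p).pow_const 2).mul (hFmeas q)).aestronglyMeasurable)
      (hFmeas r).aestronglyMeasurable
    rw [show ((fun v : ℝ × ℝ => v.1 ^ 2 * v.2) ∘ fun ω => (F p ω, F q ω)) * (id ∘ F r)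
      = fun ω => F p ω ^ 2 * F q ω * F r ω from rfl] at h
    simp only [Function.comp_def, id] at h
    rw [h, E0 r, mul_zero]
  -- four distinct coordinates (in pairs)
  have hquad : ∀ p q r s : Fin N × Fin d, p ≠ q → r ≠ s → p ≠ r → p ≠ s → q ≠ r → q ≠ s →
      ∫ ω, F p ω * F q ω * (F r ω * F s ω) ∂ℙ = 0 := by
    intro p q r s hpq hrs hpr hps hqr hqs
    have hind := (hindep.indepFun_prodMk_prodMk hFmeas p q r s hpr hps hqr hqs).comp
      (show Measurable fun v : ℝ × ℝ => v.1 * v.2 by fun_prop)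
      (show Measurable fun v : ℝ × ℝ => v.1 * v.2 by fun_prop)
    have h := hind.integral_mul_eq_mul_integral
      (((hFmeas p).mul (hFmeas q)).aestronglyMeasurable)
      (((hFmeas r).mul (hFmeas s)).aestronglyMeasurable)
    rw [show ((fun v : ℝ × ℝ => v.1 * v.2) ∘ fun ω => (F p ω, F q ω))
        * ((fun v : ℝ × ℝ => v.1 * v.2) ∘ fun ω => (F r ω, F s ω))
      = fun ω => F p ω * F q ω * (F r ω * F s ω) from rfl] at h
    simp only [Function.comp_def, id] at h
    rw [h, hpair p q hpq, hpair r s hrs, mul_zero]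
  -- monomial expectation
  have hmono : ∀ (n m : Fin N) (i j k : Fin d), j ≠ i → k ≠ i →
      ∫ ω, z n ω i * z n ω j * (z m ω i * z m ω k) ∂ℙ
        = if n = m ∧ j = k then a ^ 4 else 0 := by
    intro n m i j k hji hki
    by_cases hnm : n = m
    · subst hnm
      by_cases hjk : j = k
      · subst hjk
        rw [if_pos ⟨rfl, rfl⟩]
        have he : (fun ω => z n ω i * z n ω j * (z n ω i * z n ω j))
            = fun ω => (F (n, i) ω) ^ 2 * (F (n, j) ω) ^ 2 := by
          ext ω; simp only [F]; ring
        rw [he, hsq4 (n, i) (n, j) (by simp [Prod.ext_iff, hji.symm])]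
      · rw [if_neg (by tauto)]
        have he : (fun ω => z n ω i * z n ω j * (z n ω i * z n ω k))
            = fun ω => (F (n, i) ω) ^ 2 * F (n, j) ω * F (n, k) ω := by
          ext ω; simp only [F]; ring
        rw [he]
        exact htrip (n, i) (n, j) (n, k) (by simp [Prod.ext_iff, hki.symm])
          (by simp [Prod.ext_iff, hjk])
    · rw [if_neg (by tauto)]
      exact hquad (n, i) (n, j) (m, i) (m, k)
        (by simp [Prod.ext_iff, hji.symm]) (by simp [Prod.ext_iff, hki.symm])
        (by simp [Prod.ext_iff, hnm]) (by simp [Prod.ext_iff, hnm])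
        (by simp [Prod.ext_iff, hnm]) (by simp [Prod.ext_iff, hnm])
  -- integrability of monomials
  have hIntM : ∀ (n m : Fin N) (i j k : Fin d),
      Integrable (fun ω => z n ω i * z n ω j * (z m ω i * z m ω k)) ℙ := by
    intro n m i j k
    refine Integrable.mono' (integrable_const (a ^ 4))
      ((((hmeas n i).mul (hmeas n j)).mul ((hmeas m i).mul (hmeas m k))).aestronglyMeasurable) ?_
    filter_upwards [hae] with ω h
    have habs : ∀ n i, |z n ω i| = a := by
      intro n' i'
      rcases h n' i' with h' | h' <;> rw [h'] <;>
        simp [abs_of_pos ha, abs_of_neg (neg_neg_iff_pos.mpr ha)]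
    refine le_of_eq ?_
    have : ‖z n ω i * z n ω j * (z m ω i * z m ω k)‖
        = |z n ω i| * |z n ω j| * (|z m ω i| * |z m ω k|) := by
      simp [abs_mul]
    rw [this, habs, habs, habs, habs]
    ring
  set c : ℝ := 1 / (N * a ^ 2) with hc
  -- Step 1: rewrite the integrand a.e.
  have hstep1 : ∫ ω, ∑ i, ((1 / N : ℝ) * (∑ n, (∑ j, z n ω j * g j) / z n ω i) - g i) ^ 2 ∂ℙ
      = ∫ ω, ∑ i, (c * ∑ n, ∑ j ∈ Finset.univ.erase i, z n ω i * z n ω j * g j) ^ 2 ∂ℙ := by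
    refine integral_congr_ae ?_
    filter_upwards [hae] with ω h
    have hz2 : ∀ n i, z n ω i ^ 2 = a ^ 2 := by
      intro n i; rcases h n i with h' | h' <;> rw [h'] <;> ring
    have hz0 : ∀ n i, z n ω i ≠ 0 := by
      intro n i; rcases h n i with h' | h' <;> rw [h'] <;> simp [ha0]
    refine Finset.sum_congr rfl fun i _ => ?_
    congr 1
    have hdiv : ∀ n : Fin N, (∑ j, z n ω j * g j) / z n ω i
        = g i + (∑ j ∈ Finset.univ.erase i, z n ω i * z n ω j * g j) / a ^ 2 := by
      intro n
      rw [div_eq_iff (hz0 n i)]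
      have hsplit : (∑ j, z n ω j * g j)
          = z n ω i * g i + ∑ j ∈ Finset.univ.erase i, z n ω j * g j :=
        (Finset.add_sum_erase _ _ (Finset.mem_univ i)).symm
      rw [hsplit, add_mul]
      congr 1
      · ring
      · rw [div_mul_eq_mul_div, eq_div_iff ha2, Finset.sum_mul, Finset.sum_mul]
        refine Finset.sum_congr rfl fun j _ => ?_
        linear_combination (-(z n ω j * g j)) * hz2 n i
    simp only [hdiv]
    rw [Finset.sum_add_distrib, Finset.sum_const, Finset.card_univ, Fintype.card_fin,
      ← Finset.sum_div, nsmul_eq_mul]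
    have halg : ∀ x S : ℝ, 1/(N:ℝ) * ((N:ℝ) * x + S/a^2) - x = 1/((N:ℝ)*a^2) * S := by
      intro x S; field_simp; ring
    exact halg (g i) _
  -- Step 2: expand the square into monomials
  have hexp : ∀ ω : Ω, ∑ i, (c * ∑ n, ∑ j ∈ Finset.univ.erase i, z n ω i * z n ω j * g j) ^ 2
      = ∑ i, c ^ 2 * ∑ n, ∑ m, ∑ j ∈ Finset.univ.erase i, ∑ k ∈ Finset.univ.erase i,
          g j * g k * (z n ω i * z n ω j * (z m ω i * z m ω k)) := by
    intro ω
    refine Finset.sum_congr rfl fun i _ => ?_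
    have h1 : (c * ∑ n, ∑ j ∈ Finset.univ.erase i, z n ω i * z n ω j * g j) ^ 2
        = c ^ 2 * ((∑ n, ∑ j ∈ Finset.univ.erase i, z n ω i * z n ω j * g j)
          * (∑ m, ∑ k ∈ Finset.univ.erase i, z m ω i * z m ω k * g k)) := by ring
    rw [h1, Finset.sum_mul_sum]
    congr 1
    refine Finset.sum_congr rfl fun n _ => Finset.sum_congr rfl fun m _ => ?_
    rw [Finset.sum_mul_sum]
    refine Finset.sum_congr rfl fun j _ => Finset.sum_congr rfl fun k _ => ?_
    ring
  have hint1 : ∀ (i : Fin d) (n m : Fin N), Integrable (fun ω =>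
      ∑ j ∈ Finset.univ.erase i, ∑ k ∈ Finset.univ.erase i,
        g j * g k * (z n ω i * z n ω j * (z m ω i * z m ω k))) ℙ :=
    fun i n m => integrable_finset_sum _ fun j _ => integrable_finset_sum _ fun k _ =>
      (hIntM n m i j k).const_mul _
  have hstep2 : ∫ ω, ∑ i, (c * ∑ n, ∑ j ∈ Finset.univ.erase i, z n ω i * z n ω j * g j) ^ 2 ∂ℙ
      = ∑ i, c ^ 2 * ∑ n, ∑ m : Fin N, ∑ j ∈ Finset.univ.erase i, ∑ k ∈ Finset.univ.erase i,
          g j * g k * (if n = m ∧ j = k then a ^ 4 else 0) := by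
    simp only [hexp]
    rw [integral_finset_sum _ (fun i _ =>
      ((integrable_finset_sum _ fun n _ => integrable_finset_sum _ fun m _ =>
        hint1 i n m).const_mul _))]
    refine Finset.sum_congr rfl fun i _ => ?_
    rw [integral_const_mul]
    congr 1
    rw [integral_finset_sum _ (fun n _ => integrable_finset_sum _ fun m _ => hint1 i n m)]
    refine Finset.sum_congr rfl fun n _ => ?_
    rw [integral_finset_sum _ (fun m _ => hint1 i n m)]
    refine Finset.sum_congr rfl fun m _ => ?_
    rw [integral_finset_sum _ (fun j _ => integrable_finset_sum _ fun k _ =>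
      (hIntM n m i j k).const_mul _)]
    refine Finset.sum_congr rfl fun j hj => ?_
    rw [integral_finset_sum _ (fun k _ => (hIntM n m i j k).const_mul _)]
    refine Finset.sum_congr rfl fun k hk => ?_
    rw [integral_const_mul, hmono n m i j k (Finset.mem_erase.mp hj).1 (Finset.mem_erase.mp hk).1]
  -- Step 3: evaluate the sums
  rw [hstep1, hstep2]
  have hX : ∀ (i : Fin d) (n m : Fin N),
      (∑ j ∈ Finset.univ.erase i, ∑ k ∈ Finset.univ.erase i,
        g j * g k * (if n = m ∧ j = k then a ^ 4 else 0))
      = if n = m then a ^ 4 * ∑ j ∈ Finset.univ.erase i, g j ^ 2 else 0 := by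
    intro i n m
    by_cases hnm : n = m
    · subst hnm
      rw [if_pos rfl, Finset.mul_sum]
      refine Finset.sum_congr rfl fun j hj => ?_
      have : ∀ k ∈ Finset.univ.erase i, g j * g k * (if n = n ∧ j = k then a ^ 4 else 0)
          = if j = k then g j * g k * a ^ 4 else 0 := by
        intro k _
        by_cases hjk : j = k <;> simp [hjk]
      rw [Finset.sum_congr rfl this, Finset.sum_ite_eq _ j _]
      rw [if_pos hj]
      ring
    · rw [if_neg hnm]
      refine Finset.sum_eq_zero fun j _ => Finset.sum_eq_zero fun k _ => ?_
      rw [if_neg (by tauto), mul_zero]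
  simp only [hX]
  have hdiag : ∀ i : Fin d, (∑ n : Fin N, ∑ m : Fin N,
      if n = m then a ^ 4 * ∑ j ∈ Finset.univ.erase i, g j ^ 2 else 0)
      = N * (a ^ 4 * ∑ j ∈ Finset.univ.erase i, g j ^ 2) := by
    intro i
    rw [Finset.sum_congr rfl fun n _ => Finset.sum_ite_eq _ n
      (fun _ => a ^ 4 * ∑ j ∈ Finset.univ.erase i, g j ^ 2)]
    simp [Finset.card_univ]
  simp only [hdiag]
  have herase : ∀ i : Fin d, (∑ j ∈ Finset.univ.erase i, g j ^ 2) = (∑ j, g j ^ 2) - g i ^ 2 :=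
    fun i => Finset.sum_erase_eq_sub (Finset.mem_univ i)
  simp only [herase]
  have : ∑ i : Fin d, c ^ 2 * ((N : ℝ) * (a ^ 4 * ((∑ j, g j ^ 2) - g i ^ 2)))
      = c ^ 2 * (N : ℝ) * a ^ 4 * ((d : ℝ) * (∑ j, g j ^ 2) - ∑ i, g i ^ 2) := by
    calc ∑ i : Fin d, c ^ 2 * ((N : ℝ) * (a ^ 4 * ((∑ j, g j ^ 2) - g i ^ 2)))
        = ∑ i : Fin d, (c ^ 2 * (N : ℝ) * a ^ 4 * (∑ j, g j ^ 2)
            - c ^ 2 * (N : ℝ) * a ^ 4 * g i ^ 2) :=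
          Finset.sum_congr rfl fun i _ => by ring
      _ = (d : ℝ) * (c ^ 2 * (N : ℝ) * a ^ 4 * (∑ j, g j ^ 2))
            - c ^ 2 * (N : ℝ) * a ^ 4 * ∑ i, g i ^ 2 := by
          rw [Finset.sum_sub_distrib, Finset.sum_const, Finset.card_univ, Fintype.card_fin,
            nsmul_eq_mul, ← Finset.mul_sum]
      _ = c ^ 2 * (N : ℝ) * a ^ 4 * ((d : ℝ) * (∑ j, g j ^ 2) - ∑ i, g i ^ 2) := by ring
  rw [this, hc]
  field_simp
end
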